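/- Let A be a C*-algebra. If every densely defined closed A-linear operator between arbitrary Hilbert A-modules possesses a densely defined adjoint operator, then every bounded A-linear operator T: E → F between Hilbert A-modules possesses a bounded adjoint T*: F → E. -/

import Mathlib

/- Framework: Hilbert C*-modules over a C*-algebra `A` (via Mathlib's `CStarModule`),
densely defined operators as `LinearPMap`s, `A`-valued orthogonality, adjoints,
regularity, graphs inside `E ⊕ F`. -/

open scoped InnerProductSpace RightActions WithCStarModule

/-- The December-2024 Mathlib notion `CStarModule` (right `A`-module, `A`-valued inner product
with `⟪x, y <• a⟫ = ⟪x, y⟫ * a`), spelled out since Mathlib's `CStarModule` now means a left module. -/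
class OldCStarModule (A : outParam <| Type*) (E : Type*) [NonUnitalSemiring A] [StarRing A]
    [Module ℂ A] [AddCommGroup E] [Module ℂ E] [PartialOrder A] [SMul Aᵐᵒᵖ E] [Norm A] [Norm E]
    extends Inner A E where
  inner_add_right {x} {y} {z} : inner x (y + z) = inner x y + inner x z
  inner_self_nonneg {x} : 0 ≤ inner x x
  inner_self {x} : inner x x = 0 ↔ x = 0
  inner_op_smul_right {a : A} {x y : E} : inner x (y <• a) = inner x y * a
  inner_smul_right_complex {z : ℂ} {x} {y} : inner x (z • y) = z • inner x y
  star_inner x y : star (inner x y) = inner y x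
  norm_eq_sqrt_norm_inner_self x : ‖x‖ = √‖inner x x‖

section OldCStarModuleBridge

variable (A : Type*) [NonUnitalCStarAlgebra A] [PartialOrder A] [StarOrderedRing A]

/-- An old-style right C⋆-module over `A` is a (current) C⋆-module over `Aᵐᵒᵖ`. -/
noncomputable def OldCStarModule.toNew (E : Type*) [NormedAddCommGroup E] [Module ℂ E]
    [SMul Aᵐᵒᵖ E] [OldCStarModule A E] : CStarModule Aᵐᵒᵖ E where
  inner x y := MulOpposite.op ⟪x, y⟫_A
  inner_add_right {x y z} := by
    change MulOpposite.op ⟪x, y + z⟫_A = MulOpposite.op ⟪x, y⟫_A + MulOpposite.op ⟪x, z⟫_A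
    rw [OldCStarModule.inner_add_right, MulOpposite.op_add]
  inner_self_nonneg {x} := by
    change (0 : Aᵐᵒᵖ) ≤ MulOpposite.op ⟪x, x⟫_A
    exact MulOpposite.unop_le_unop.mp OldCStarModule.inner_self_nonneg
  inner_self {x} := by
    change MulOpposite.op ⟪x, x⟫_A = 0 ↔ x = 0
    rw [MulOpposite.op_eq_zero_iff, OldCStarModule.inner_self]
  inner_op_smul_right {a x y} := by
    change MulOpposite.op ⟪x, y <• a.unop⟫_A = a * MulOpposite.op ⟪x, y⟫_A
    rw [OldCStarModule.inner_op_smul_right, MulOpposite.op_mul, MulOpposite.op_unop]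
  inner_smul_right_complex {z x y} := by
    change MulOpposite.op ⟪x, z • y⟫_A = z • MulOpposite.op ⟪x, y⟫_A
    rw [OldCStarModule.inner_smul_right_complex, MulOpposite.op_smul]
  star_inner x y := congrArg MulOpposite.op (OldCStarModule.star_inner x y)
  norm_eq_sqrt_norm_inner_self x := OldCStarModule.norm_eq_sqrt_norm_inner_self x

/-- A (current) C⋆-module over `Aᵐᵒᵖ` is an old-style right C⋆-module over `A`. -/
noncomputable def OldCStarModule.ofNew (E : Type*) [NormedAddCommGroup E] [Module ℂ E]
    [SMul Aᵐᵒᵖ E] [CStarModule Aᵐᵒᵖ E] : OldCStarModule A E where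
  inner x y := MulOpposite.unop (Inner.inner (Aᵐᵒᵖ) x y)
  inner_add_right {x y z} := by
    change MulOpposite.unop (Inner.inner (Aᵐᵒᵖ) x (y + z)) =
      MulOpposite.unop (Inner.inner (Aᵐᵒᵖ) x y) + MulOpposite.unop (Inner.inner (Aᵐᵒᵖ) x z)
    rw [CStarModule.inner_add_right, MulOpposite.unop_add]
  inner_self_nonneg {x} := by
    change (0 : A) ≤ MulOpposite.unop (Inner.inner (Aᵐᵒᵖ) x x)
    exact MulOpposite.unop_le_unop.mpr (CStarModule.inner_self_nonneg (A := Aᵐᵒᵖ))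
  inner_self {x} := by
    change MulOpposite.unop (Inner.inner (Aᵐᵒᵖ) x x) = 0 ↔ x = 0
    rw [MulOpposite.unop_eq_zero_iff, CStarModule.inner_self]
  inner_op_smul_right {a x y} := by
    change MulOpposite.unop (Inner.inner (Aᵐᵒᵖ) x (MulOpposite.op a • y)) =
      MulOpposite.unop (Inner.inner (Aᵐᵒᵖ) x y) * a
    rw [CStarModule.inner_op_smul_right, MulOpposite.unop_mul, MulOpposite.unop_op]
  inner_smul_right_complex {z x y} := by
    change MulOpposite.unop (Inner.inner (Aᵐᵒᵖ) x (z • y)) =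
      z • MulOpposite.unop (Inner.inner (Aᵐᵒᵖ) x y)
    rw [CStarModule.inner_smul_right_complex, MulOpposite.unop_smul]
  star_inner x y := congrArg MulOpposite.unop (CStarModule.star_inner (A := Aᵐᵒᵖ) x y)
  norm_eq_sqrt_norm_inner_self x := CStarModule.norm_eq_sqrt_norm_inner_self (A := Aᵐᵒᵖ) x

variable {A}
variable {E F : Type*}
  [NormedAddCommGroup E] [Module ℂ E] [SMul Aᵐᵒᵖ E] [OldCStarModule A E]
  [NormedAddCommGroup F] [Module ℂ F] [SMul Aᵐᵒᵖ F] [OldCStarModule A F]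

/-- The old `C⋆ᵐᵒᵈ (E × F)`: norm `√‖⟪x.1, x.1⟫ + ⟪x.2, x.2⟫‖`. -/
noncomputable instance OldCStarModule.instNormedAddCommGroupProd :
    NormedAddCommGroup C⋆ᵐᵒᵈ(Aᵐᵒᵖ, E × F) :=
  letI := OldCStarModule.toNew A E; letI := OldCStarModule.toNew A F; inferInstance

/-- The old `C⋆ᵐᵒᵈ (E × F)`: inner product `⟪x, y⟫ = ⟪x.1, y.1⟫ + ⟪x.2, y.2⟫`. -/
noncomputable instance OldCStarModule.instProd : OldCStarModule A C⋆ᵐᵒᵈ(Aᵐᵒᵖ, E × F) :=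
  letI := OldCStarModule.toNew A E; letI := OldCStarModule.toNew A F
  OldCStarModule.ofNew A _

end OldCStarModuleBridge

namespace RegularOperators

variable (A : Type*) [NonUnitalCStarAlgebra A] [PartialOrder A] [StarOrderedRing A]

section Defs

variable {E F : Type*}
  [NormedAddCommGroup E] [Module ℂ E] [SMul Aᵐᵒᵖ E] [OldCStarModule A E]
  [NormedAddCommGroup F] [Module ℂ F] [SMul Aᵐᵒᵖ F] [OldCStarModule A F]

/-- Orthogonal complement of a subset w.r.t. the `A`-valued inner product. -/
def ortho (S : Set E) : Set E := {y | ∀ u ∈ S, ⟪u, y⟫_A = 0}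

/-- `S` is orthogonally complemented (an orthogonal summand): every element of `E`
decomposes as a sum of an element of `S` and an element of `S^⊥`. -/
def OrthoComplemented (S : Set E) : Prop := ∀ z : E, ∃ u ∈ S, ∃ v ∈ ortho A S, z = u + v

/-- A partially defined operator is `A`-linear (for the right `A`-module action). -/
def AModuleMap (t : E →ₗ.[ℂ] F) : Prop :=
  ∀ (a : A) (x : t.domain), ∃ hx : (x : E) <• a ∈ t.domain, t ⟨(x : E) <• a, hx⟩ = (t x) <• a

/-- Kernel of a partially defined operator, as a subset of `E`. -/
def kerSet (t : E →ₗ.[ℂ] F) : Set E := {x | ∃ hx : x ∈ t.domain, t ⟨x, hx⟩ = 0}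

/-- Range of a partially defined operator. -/
def ranSet (t : E →ₗ.[ℂ] F) : Set F := {y | ∃ x : t.domain, t x = y}

/-- Domain of the adjoint: those `y` for which some `z` satisfies `⟪tx, y⟫ = ⟪x, z⟫`
for all `x` in the domain of `t`. -/
def adjDomain (t : E →ₗ.[ℂ] F) : Set F :=
  {y | ∃ z : E, ∀ x : t.domain, ⟪t x, y⟫_A = ⟪(x : E), z⟫_A}

/-- `s` is the adjoint operator `t*` of `t`. -/
structure IsAdjoint (t : E →ₗ.[ℂ] F) (s : F →ₗ.[ℂ] E) : Prop where
  dom : (s.domain : Set F) = adjDomain A t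
  inner_eq : ∀ (x : t.domain) (y : s.domain), ⟪t x, (y : F)⟫_A = ⟪(x : E), s y⟫_A

/-- The range of `1 + t*t` (where `s` plays the role of `t*`). -/
def onePlusRange (t : E →ₗ.[ℂ] F) (s : F →ₗ.[ℂ] E) : Set E :=
  {u | ∃ (x : t.domain) (h : t x ∈ s.domain), (x : E) + s ⟨t x, h⟩ = u}

/-- `t` is a regular operator with adjoint `s`: it is `A`-linear, densely defined,
closed, adjointable with densely defined adjoint, and `1 + t*t` has dense range. -/
structure IsRegular (t : E →ₗ.[ℂ] F) (s : F →ₗ.[ℂ] E) : Prop where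
  amod : AModuleMap A t
  denseDom : Dense (t.domain : Set E)
  closedGraph : IsClosed (t.graph : Set (E × F))
  adj : IsAdjoint A t s
  denseAdjDom : Dense (s.domain : Set F)
  denseOnePlusRange : Dense (onePlusRange t s)

/-- The graph of `t` inside the Hilbert `A`-module `E ⊕ F`. -/
def graphSet (t : E →ₗ.[ℂ] F) : Set (C⋆ᵐᵒᵈ(Aᵐᵒᵖ, E × F)) :=
  {w | ∃ x : t.domain, WithCStarModule.equiv Aᵐᵒᵖ (E × F) w = ((x : E), t x)}

/-- The range of `P_F ∘ P_{G(t)^⊥}`, i.e. the image of `G(t)^⊥ ⊆ E ⊕ F` under the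
canonical projection onto `F`. -/
def pfRange (t : E →ₗ.[ℂ] F) : Set F :=
  {y | ∃ w ∈ ortho A (graphSet A t), (WithCStarModule.equiv Aᵐᵒᵖ (E × F) w).2 = y}

end Defs

end RegularOperators

open RegularOperators

universe u

variable {A : Type u} [NonUnitalCStarAlgebra A] [PartialOrder A] [StarOrderedRing A]
variable {E F : Type u}
  [NormedAddCommGroup E] [Module ℂ E] [SMul Aᵐᵒᵖ E] [OldCStarModule A E] [CompleteSpace E]
  [NormedAddCommGroup F] [Module ℂ F] [SMul Aᵐᵒᵖ F] [OldCStarModule A F] [CompleteSpace F]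

/-- if every densely defined closed `A`-linear operator between Hilbert
`A`-modules possesses a densely defined adjoint, then every bounded `A`-linear operator
`T : E → F` possesses a bounded adjoint `T* : F → E`. -/
theorem bounded_adjointable_of_forall_densely_defined_adjointable
    (h : ∀ (E' F' : Type u) [NormedAddCommGroup E'] [Module ℂ E'] [SMul Aᵐᵒᵖ E']
      [OldCStarModule A E'] [CompleteSpace E'] [NormedAddCommGroup F'] [Module ℂ F']
      [SMul Aᵐᵒᵖ F'] [OldCStarModule A F'] [CompleteSpace F'] (t : E' →ₗ.[ℂ] F'),
      AModuleMap A t → Dense (t.domain : Set E') → IsClosed (t.graph : Set (E' × F')) →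
        ∃ s : F' →ₗ.[ℂ] E', IsAdjoint A t s ∧ Dense (s.domain : Set F'))
    (T : E →L[ℂ] F) (hmod : ∀ (a : A) (x : E), T (x <• a) = (T x) <• a) :
    ∃ Ts : F →L[ℂ] E, ∀ (x : E) (y : F), ⟪T x, y⟫_A = ⟪x, Ts y⟫_A := by
  letI := OldCStarModule.toNew A E
  letI := OldCStarModule.toNew A F
  letI : NormedSpace ℂ E := .ofCore (CStarModule.normedSpaceCore Aᵐᵒᵖ)
  letI : NormedSpace ℂ F := .ofCore (CStarModule.normedSpaceCore Aᵐᵒᵖ)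
  set t : E →ₗ.[ℂ] F := (T : E →ₗ[ℂ] F).toPMap ⊤ with ht
  have hamod : AModuleMap A t := by
    intro a x
    exact ⟨Submodule.mem_top, hmod a x⟩
  have hdense : Dense (t.domain : Set E) := by
    simp only [t, LinearMap.toPMap_domain, Submodule.top_coe]
    exact dense_univ
  have hclosed : IsClosed (t.graph : Set (E × F)) := by
    have hgr : (t.graph : Set (E × F)) = {p : E × F | T p.1 = p.2} := by
      ext p
      simp only [SetLike.mem_coe, LinearPMap.mem_graph_iff, Set.mem_setOf_eq]
      constructor
      · rintro ⟨y, h1, h2⟩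
        rw [← h1, ← h2]
        rfl
      · intro hp
        exact ⟨⟨p.1, Submodule.mem_top⟩, rfl, hp⟩
    rw [hgr]
    exact isClosed_eq (T.continuous.comp continuous_fst) continuous_snd
  obtain ⟨s, hadj, hsd⟩ := h E F t hamod hdense hclosed
  have hinner : ∀ (x : E) (y : s.domain), ⟪T x, (y : F)⟫_A = ⟪x, s y⟫_A := by
    intro x y
    have := hadj.inner_eq ⟨x, Submodule.mem_top⟩ y
    exact this
  have bound : ∀ y : s.domain, ‖s y‖ ≤ ‖T‖ * ‖(y : F)‖ := by
    intro y
    rcases eq_or_ne (s y) 0 with h0 | h0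
    · rw [h0, norm_zero]
      positivity
    · have hpos : 0 < ‖s y‖ := norm_pos_iff.mpr h0
      have h1 : ‖s y‖ ^ 2 ≤ (‖T‖ * ‖(y : F)‖) * ‖s y‖ := by
        calc ‖s y‖ ^ 2 = ‖⟪s y, s y⟫_A‖ := by exact CStarModule.norm_sq_eq Aᵐᵒᵖ
          _ = ‖⟪T (s y), (y : F)⟫_A‖ := by rw [hinner (s y) y]
          _ ≤ ‖T (s y)‖ * ‖(y : F)‖ := by exact CStarModule.norm_inner_le (A := Aᵐᵒᵖ) F
          _ ≤ (‖T‖ * ‖s y‖) * ‖(y : F)‖ := by gcongr; exact T.le_opNorm _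
          _ = (‖T‖ * ‖(y : F)‖) * ‖s y‖ := by ring
      nlinarith
  let f : s.domain →L[ℂ] E := LinearMap.mkContinuous s.toFun ‖T‖ bound
  let e : s.domain →L[ℂ] F := s.domain.subtypeL
  have hui : IsUniformInducing ⇑e := isometry_subtype_coe.isUniformInducing
  have hdr : DenseRange ⇑e := hsd.denseRange_val
  refine ⟨f.extend e, fun x y => ?_⟩
  refine hdr.induction_on y ?_ ?_
  · exact isClosed_eq
      (MulOpposite.continuous_unop.comp ((CStarModule.continuous_inner (A := Aᵐᵒᵖ) (E := F)).comp
        (continuous_const.prodMk continuous_id)))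
      (MulOpposite.continuous_unop.comp ((CStarModule.continuous_inner (A := Aᵐᵒᵖ) (E := E)).comp
        (continuous_const.prodMk (f.extend e).continuous)))
  · intro z
    show ⟪T x, (e z : F)⟫_A = ⟪x, (f.extend e) (e z)⟫_A
    rw [ContinuousLinearMap.extend_eq (h_dense := hdr) (h_e := hui)]
    exact hinner x z
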